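/- arXiv:1710.08622 — 4 statements merged into one kernel-verified Lean document; each statement's English description precedes it below -/
import Mathlib

section
/- Let N be a bounded operator on a Hilbert space K with ‖N‖ ≤ 1 and N² = 0, and let H ⊆ K be a closed subspace with orthogonal projection P. If T ∈ B(H) satisfies T = 2·P N|_H (the compression of 2N to H), then the numerical radius of T is at most 1. -/
open scoped InnerProductSpace
open ContinuousLinearMap

/-- If `N` is a contraction on `K` with `N² = 0` and `T ∈ B(H)` is the
compression of `2N` to a closed subspace `H ⊆ K`, then `w(T) ≤ 1`. -/
theorem numericalRadius_le_one_of_nilpotent_dilation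
    {K : Type*} [NormedAddCommGroup K] [InnerProductSpace ℂ K] [CompleteSpace K]
    (H : Submodule ℂ K) [CompleteSpace H]
    (N : K →L[ℂ] K) (hN : ‖N‖ ≤ 1) (hN2 : N * N = 0)
    (T : H →L[ℂ] H)
    (hT : ∀ ξ : H, T ξ = (2 : ℂ) • (H.orthogonalProjectionOnto (N (ξ : K)))) :
    ∀ ξ : H, ‖ξ‖ = 1 → ‖⟪T ξ, ξ⟫_ℂ‖ ≤ 1 := by
  intro ξ hξ
  set x : K := (ξ : K) with hx
  -- kernel of N as a submodule
  set S : Submodule ℂ K := N.ker with hS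
  haveI : Submodule.HasOrthogonalProjection S := by
    have hc : IsClosed (S : Set K) := ContinuousLinearMap.isClosed_ker N
    haveI : CompleteSpace S := hc.completeSpace_coe
    infer_instance
  set a : K := (S.orthogonalProjectionOnto x : K) with ha
  set b : K := x - a with hb
  have hxab : x = a + b := by simp [hb]
  have haS : a ∈ S := (S.orthogonalProjectionOnto x).2
  have hbS : b ∈ Sᗮ := Submodule.sub_starProjection_mem_orthogonal (K := S) x
  have hNa : N a = 0 := haS
  have hNbker : N b ∈ S := by
    have := congrArg (fun f : K →L[ℂ] K => f b) hN2
    exact (by simpa [ContinuousLinearMap.mul_apply] using this : N (N b) = 0)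
  -- inner product computation
  have hTinner : ⟪T ξ, ξ⟫_ℂ = (2:ℂ) * ⟪N x, x⟫_ℂ := by
    rw [hT ξ]
    rw [inner_smul_left]
    rw [Submodule.inner_orthogonalProjection_eq_of_mem_right]
    rw [map_ofNat]
  have hNx : N x = N b := by rw [hxab]; simp [hNa]
  have hNxx : ⟪N x, x⟫_ℂ = ⟪N b, a⟫_ℂ := by
    rw [hNx, hxab, inner_add_right]
    have : ⟪N b, b⟫_ℂ = 0 := by
      exact (Submodule.mem_orthogonal S b).mp hbS (N b) hNbker
    rw [this, add_zero]
  have hNb : ‖N b‖ ≤ ‖b‖ := by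
    calc ‖N b‖ ≤ ‖N‖ * ‖b‖ := N.le_opNorm b
    _ ≤ 1 * ‖b‖ := by gcongr
    _ = ‖b‖ := one_mul _
  have hbound : ‖⟪N b, a⟫_ℂ‖ ≤ ‖b‖ * ‖a‖ := by
    calc ‖⟪N b, a⟫_ℂ‖ ≤ ‖N b‖ * ‖a‖ := norm_inner_le_norm _ _
    _ ≤ ‖b‖ * ‖a‖ := by gcongr
  have hpyth : ‖a‖^2 + ‖b‖^2 = 1 := by
    have h1 : ‖x‖ = 1 := by rw [hx, Submodule.norm_coe]; exact hξ
    have := norm_add_sq_eq_norm_sq_add_norm_sq_of_inner_eq_zero a b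
      ((Submodule.mem_orthogonal S b).mp hbS a haS)
    rw [← hxab] at this
    rw [h1] at this; nlinarith [this]
  have h2ab : 2 * (‖b‖ * ‖a‖) ≤ 1 := by
    nlinarith [sq_nonneg (‖a‖ - ‖b‖), norm_nonneg a, norm_nonneg b]
  calc ‖⟪T ξ, ξ⟫_ℂ‖ = 2 * ‖⟪N b, a⟫_ℂ‖ := by
        rw [hTinner, hNxx, norm_mul]; norm_num
    _ ≤ 2 * (‖b‖ * ‖a‖) := by gcongr
    _ ≤ 1 := h2ab
end

section
/- Let T ∈ B(H) and suppose there exists a selfadjoint operator A with 0 ≤ A ≤ I such that the 2×2 operator matrix [[A, T*],[T, I−A]] acting on H ⊕ H is positive semidefinite. Then the numerical radius of T is at most 1/2. -/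
open scoped InnerProductSpace
open ContinuousLinearMap

/-- If there is a selfadjoint `A` with `0 ≤ A ≤ I` such that the block operator
`[[A, T*], [T, I-A]]` on `H ⊕ H` is positive semidefinite (expressed via its quadratic form),
then `w(T) ≤ 1/2`. -/
theorem numericalRadius_le_half_of_block_positive
    {H : Type*} [NormedAddCommGroup H] [InnerProductSpace ℂ H] [CompleteSpace H]
    (T A : H →L[ℂ] H) (hA : IsSelfAdjoint A)
    (hA0 : A.IsPositive) (hA1 : ((1 : H →L[ℂ] H) - A).IsPositive)
    (hblock : ∀ ξ η : H,
      0 ≤ (⟪A ξ + adjoint T η, ξ⟫_ℂ + ⟪T ξ + ((1 : H →L[ℂ] H) - A) η, η⟫_ℂ).re) :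
    ∀ ξ : H, ‖ξ‖ = 1 → ‖⟪T ξ, ξ⟫_ℂ‖ ≤ 1 / 2 := by
  intro ξ hξ
  set z := ⟪T ξ, ξ⟫_ℂ with hz
  by_cases h0 : z = 0
  · simp [h0]
  · have habs : (0:ℝ) < ‖z‖ := norm_pos_iff.mpr h0
    have habsC : (‖z‖ : ℂ) ≠ 0 := by exact_mod_cast habs.ne'
    set c : ℂ := -(starRingEnd ℂ z) / ‖z‖ with hc
    have hcz : c * z = -(‖z‖ : ℂ) := by
      rw [hc, div_mul_eq_mul_div, neg_mul, mul_comm, Complex.mul_conj', neg_div,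
        pow_two, mul_div_assoc, div_self habsC, mul_one]
    have hcc : (starRingEnd ℂ c) * c = 1 := by
      rw [hc, map_div₀, map_neg, Complex.conj_conj, Complex.conj_ofReal,
        div_mul_div_comm, neg_mul_neg, Complex.mul_conj', pow_two,
        div_self (mul_ne_zero habsC habsC)]
    have h1 : (starRingEnd ℂ c) * (starRingEnd ℂ z) = -(‖z‖ : ℂ) := by
      rw [← map_mul, hcz, map_neg, Complex.conj_ofReal]
    have hinner : ⟪ξ, ξ⟫_ℂ = 1 := by
      rw [inner_self_eq_norm_sq_to_K, hξ]; norm_num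
    have hconj : ⟪ξ, T ξ⟫_ℂ = starRingEnd ℂ z := by rw [hz, ← inner_conj_symm]
    have key := hblock ξ (c • ξ)
    simp only [map_smul, inner_add_left, inner_smul_left, inner_smul_right,
      ContinuousLinearMap.adjoint_inner_left, sub_apply, one_apply_eq_self, inner_sub_left] at key
    have hE : ⟪A ξ, ξ⟫_ℂ + (starRingEnd ℂ) c * ⟪ξ, T ξ⟫_ℂ +
        c * (⟪T ξ, ξ⟫_ℂ + (starRingEnd ℂ) c * (⟪ξ, ξ⟫_ℂ - ⟪A ξ, ξ⟫_ℂ)) =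
        1 - 2 * (‖z‖ : ℂ) := by
      rw [hconj, hinner, ← hz]
      linear_combination h1 + hcz + (1 - ⟪A ξ, ξ⟫_ℂ) * hcc
    rw [hE] at key
    simp only [Complex.sub_re, Complex.one_re, Complex.mul_re, Complex.ofReal_re,
      Complex.ofReal_im, Complex.re_ofNat, Complex.im_ofNat] at key
    linarith
end

section
/- If T = (I+Y)^{1/2} Z (I−Y)^{1/2} with Y a selfadjoint contraction and Z a contraction that is isometric on the range of (I−Y)^{1/2}, then setting C = (1/√2)·Z(I−Y)^{1/2}, one has I − C*C = (1/2)(I+Y) and T = 2(I − C*C)^{1/2} C. -/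
set_option synthInstance.maxHeartbeats 1000000
set_option maxHeartbeats 1000000

open ContinuousLinearMap

/-- If `T = (I+Y)^{1/2} Z (I-Y)^{1/2}` with `Y` a selfadjoint contraction and
`Z` a contraction which is isometric on the range of `(I-Y)^{1/2}` (i.e.
`(I-Y)^{1/2} Z* Z (I-Y)^{1/2} = I - Y`), then `C = (1/√2) Z (I-Y)^{1/2}` satisfies
`I - C*C = (I+Y)/2` and `T = 2 (I - C*C)^{1/2} C`. -/
theorem ando_C_decomposition
    {H : Type*} [NormedAddCommGroup H] [InnerProductSpace ℂ H] [CompleteSpace H]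
    (T Y Z : H →L[ℂ] H) (hY : IsSelfAdjoint Y) (hYnorm : ‖Y‖ ≤ 1) (hZ : ‖Z‖ ≤ 1)
    (hiso : CFC.sqrt ((1 : H →L[ℂ] H) - Y) * (adjoint Z * Z) * CFC.sqrt ((1 : H →L[ℂ] H) - Y)
        = (1 : H →L[ℂ] H) - Y)
    (hT : T = CFC.sqrt ((1 : H →L[ℂ] H) + Y) * Z * CFC.sqrt ((1 : H →L[ℂ] H) - Y))
    (C : H →L[ℂ] H)
    (hC : C = ((1 / Real.sqrt 2 : ℝ) : ℂ) • (Z * CFC.sqrt ((1 : H →L[ℂ] H) - Y))) :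
    (1 : H →L[ℂ] H) - adjoint C * C = (1 / 2 : ℂ) • ((1 : H →L[ℂ] H) + Y) ∧
      T = (2 : ℂ) • (CFC.sqrt ((1 : H →L[ℂ] H) - adjoint C * C) * C) := by
  set c : ℂ := ((1 / Real.sqrt 2 : ℝ) : ℂ) with hc
  have h2 : Real.sqrt 2 * Real.sqrt 2 = 2 := Real.mul_self_sqrt (by norm_num)
  have hc2 : c * c = 1 / 2 := by
    rw [hc, ← Complex.ofReal_mul, div_mul_div_comm, one_mul, h2]
    norm_num
  set S : H →L[ℂ] H := CFC.sqrt ((1 : H →L[ℂ] H) - Y) with hS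
  have hSnn : (0:H →L[ℂ] H) ≤ S := CFC.sqrt_nonneg _
  have hSadj : star S = S := hSnn.isSelfAdjoint
  have hadjC : adjoint C = c • (S * adjoint Z) := by
    rw [hC, ← ContinuousLinearMap.star_eq_adjoint, star_smul, star_mul, hSadj,
      ContinuousLinearMap.star_eq_adjoint]
    congr 1
    rw [hc, RCLike.star_def, Complex.conj_ofReal]
  have hCC : adjoint C * C = (1/2 : ℂ) • ((1 : H →L[ℂ] H) - Y) := by
    rw [hadjC, hC, smul_mul_assoc, mul_smul_comm, smul_smul, hc2, ← hiso]
    congr 1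
  have h1pY : (0:H →L[ℂ] H) ≤ 1 + Y := by
    rw [← sub_neg_eq_add, sub_nonneg]
    calc -Y ≤ algebraMap ℝ _ ‖Y‖ := by simpa using (hY.neg).le_algebraMap_norm_self
    _ ≤ 1 := by
      rw [← sub_nonneg, ← map_one (algebraMap ℝ (H →L[ℂ] H)), ← map_sub,
        Algebra.algebraMap_eq_smul_one]
      exact smul_nonneg (by linarith) zero_le_one
  have hfirst : (1 : H →L[ℂ] H) - adjoint C * C = (1 / 2 : ℂ) • ((1 : H →L[ℂ] H) + Y) := by
    rw [hCC]; module
  refine ⟨hfirst, ?_⟩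
  have hsqrt : CFC.sqrt ((1 : H →L[ℂ] H) - adjoint C * C)
      = c • CFC.sqrt ((1 : H →L[ℂ] H) + Y) := by
    rw [hfirst]
    refine CFC.sqrt_unique ?_ ?_
    · rw [smul_mul_assoc, mul_smul_comm, smul_smul, hc2,
        CFC.sqrt_mul_sqrt_self _ h1pY]
    · rw [hc, ← Complex.coe_algebraMap, algebraMap_smul]
      exact smul_nonneg (by positivity) (CFC.sqrt_nonneg _)
  rw [hsqrt, hC, hT, smul_mul_assoc, mul_smul_comm, smul_smul, smul_smul]
  have h1 : (2:ℂ) * c * c = 1 := by rw [mul_assoc, hc2]; norm_num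
  rw [h1, one_smul, mul_assoc]
end

section
/- Let τ(λ) = Σ_{n=−N}^{N} a_n λ^n be a trigonometric polynomial with complex coefficients such that τ(λ) > 0 (real and strictly positive) for all λ on the unit circle. Then there exists a polynomial p(z) = Σ_{n=0}^{N} p_n z^n such that τ(λ) = |p(λ)|² for all λ on the unit circle. -/
open Polynomial Complex

lemma circle_infinite : {l : ℂ | ‖l‖ = 1}.Infinite := by
  have h1 : Set.InjOn (fun t : ℝ => Complex.exp (t * Complex.I)) (Set.Ioo 0 1) := by
    intro s hs t ht h
    rw [Complex.exp_eq_exp_iff_exists_int] at h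
    obtain ⟨n, hn⟩ := h
    have hn' : (s : ℂ) = t + n * (2 * Real.pi) :=
      mul_right_cancel₀ Complex.I_ne_zero (by push_cast; linear_combination hn)
    have heq : s = t + n * (2 * Real.pi) := by exact_mod_cast hn'
    have hπ : (2:ℝ) ≤ 2 * Real.pi := by nlinarith [Real.pi_gt_three]
    rcases lt_trichotomy n 0 with h' | h' | h'
    · have h2 : ((n:ℝ)) ≤ ((-1:ℤ):ℝ) := Int.cast_le.mpr (by omega)
      norm_num at h2
      nlinarith [hs.1, hs.2, ht.1, ht.2]
    · simp [h'] at heq; linarith [heq]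
    · have : (1:ℝ) ≤ n := by exact_mod_cast h'
      nlinarith [hs.1, hs.2, ht.1, ht.2]
  have h2 : (Set.Ioo (0:ℝ) 1).Infinite := Set.Ioo_infinite (by norm_num)
  refine (h2.image h1).mono ?_
  rintro z ⟨t, _, rfl⟩
  simp [Complex.norm_exp]

lemma poly_zero_of_circle (P : ℂ[X]) (h : ∀ l : ℂ, ‖l‖ = 1 → P.eval l = 0) : P = 0 :=
  P.eq_zero_of_infinite_isRoot (circle_infinite.mono (fun l hl => h l hl))

open Polynomial Complex Finset

noncomputable def sumPoly (N : ℕ) (a : ℤ → ℂ) : ℂ[X] :=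
  ∑ n ∈ Finset.Icc (-(N : ℤ)) N, C (a n) * X ^ (n + N).toNat

lemma sumPoly_coeff (N : ℕ) (a : ℤ → ℂ) (k : ℕ) :
    (sumPoly N a).coeff k = if (k : ℤ) ≤ 2 * N then a ((k : ℤ) - N) else 0 := by
  rw [sumPoly, Polynomial.finset_sum_coeff]
  simp only [Polynomial.coeff_C_mul, Polynomial.coeff_X_pow]
  split
  · next h =>
    rw [Finset.sum_eq_single ((k : ℤ) - N)]
    · simp
    · intro n hn hne
      simp only [Finset.mem_Icc] at hn
      have : ¬ (k = (n + N).toNat) := by omega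
      simp [this]
    · intro hmem
      simp only [Finset.mem_Icc] at hmem
      omega
  · next h =>
    apply Finset.sum_eq_zero
    intro n hn
    simp only [Finset.mem_Icc] at hn
    have : ¬ (k = (n + N).toNat) := by omega
    simp [this]

lemma sumPoly_eval (N : ℕ) (a : ℤ → ℂ) (l : ℂ) (hl : l ≠ 0) :
    (sumPoly N a).eval l = l ^ N * ∑ n ∈ Finset.Icc (-(N : ℤ)) N, a n * l ^ n := by
  rw [sumPoly, Polynomial.eval_finset_sum, Finset.mul_sum]
  apply Finset.sum_congr rfl
  intro n hn
  simp only [Finset.mem_Icc] at hn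
  simp only [Polynomial.eval_mul, Polynomial.eval_C, Polynomial.eval_pow, Polynomial.eval_X]
  have h1 : ((n + N).toNat : ℤ) = n + N := Int.toNat_of_nonneg (by omega)
  calc a n * l ^ (n + N).toNat = a n * l ^ ((n : ℤ) + N) := by
        rw [← zpow_natCast, h1]
    _ = l ^ (N : ℕ) * (a n * l ^ n) := by
        rw [zpow_add₀ hl, ← zpow_natCast l N]; ring

lemma conj_circle {l : ℂ} (hl : ‖l‖ = 1) : (starRingEnd ℂ) l = l⁻¹ := by
  have h : l * (starRingEnd ℂ) l = 1 := by
    rw [Complex.mul_conj]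
    norm_cast
    rw [Complex.normSq_eq_norm_sq, hl]; norm_num
  field_simp [show l ≠ 0 by intro h'; simp [h'] at hl] at h ⊢
  linear_combination h

lemma conj_sum (N : ℕ) (a : ℤ → ℂ) (l : ℂ) (hl : ‖l‖ = 1)
    (him : (∑ n ∈ Finset.Icc (-(N : ℤ)) N, a n * l ^ n).im = 0) :
    ∑ n ∈ Finset.Icc (-(N : ℤ)) N, (starRingEnd ℂ) (a (-n)) * l ^ n
      = ∑ n ∈ Finset.Icc (-(N : ℤ)) N, a n * l ^ n := by
  have hl0 : l ≠ 0 := by intro h'; simp [h'] at hl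
  have hreal : (starRingEnd ℂ) (∑ n ∈ Finset.Icc (-(N : ℤ)) N, a n * l ^ n)
      = ∑ n ∈ Finset.Icc (-(N : ℤ)) N, a n * l ^ n :=
    Complex.conj_eq_iff_im.mpr him
  calc ∑ n ∈ Finset.Icc (-(N : ℤ)) N, (starRingEnd ℂ) (a (-n)) * l ^ n
      = ∑ n ∈ Finset.Icc (-(N : ℤ)) N, (starRingEnd ℂ) (a n) * l ^ (-n) := by
        apply Finset.sum_nbij' (i := fun n => -n) (j := fun n => -n) <;>
          simp [Finset.mem_Icc] <;> intros <;> omega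
    _ = (starRingEnd ℂ) (∑ n ∈ Finset.Icc (-(N : ℤ)) N, a n * l ^ n) := by
        rw [map_sum]
        apply Finset.sum_congr rfl
        intro n _
        rw [map_mul, map_zpow₀, conj_circle hl, inv_zpow, ← zpow_neg]
    _ = _ := hreal

lemma coeff_symm (N : ℕ) (a : ℤ → ℂ)
    (hpos : ∀ lam : ℂ, ‖lam‖ = 1 →
      (∑ n ∈ Finset.Icc (-(N : ℤ)) N, a n * lam ^ n).im = 0 ∧
      0 < (∑ n ∈ Finset.Icc (-(N : ℤ)) N, a n * lam ^ n).re) :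
    ∀ n ∈ Finset.Icc (-(N : ℤ)) N, a n = (starRingEnd ℂ) (a (-n)) := by
  have hP : sumPoly N (fun n => a n - (starRingEnd ℂ) (a (-n))) = 0 := by
    apply poly_zero_of_circle
    intro l hl
    have hl0 : l ≠ 0 := by intro h'; simp [h'] at hl
    rw [sumPoly_eval _ _ _ hl0]
    have := conj_sum N a l hl (hpos l hl).1
    simp only [sub_mul, Finset.sum_sub_distrib]
    rw [this]
    ring
  intro n hn
  simp only [Finset.mem_Icc] at hn
  have := congrArg (fun P => P.coeff (n + N).toNat) hP
  simp only [Polynomial.coeff_zero] at this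
  rw [sumPoly_coeff] at this
  have h1 : ((n + N).toNat : ℤ) = n + N := Int.toNat_of_nonneg (by omega)
  rw [h1] at this
  have h2 : n + (N:ℤ) ≤ 2 * N := by omega
  rw [if_pos h2] at this
  have h3 : n + (N:ℤ) - N = n := by ring
  rw [h3] at this
  exact sub_eq_zero.mp this

open Polynomial Complex

noncomputable def Phi (p : ℂ[X]) : ℂ[X] := (p.map (starRingEnd ℂ)).reverse

lemma Phi_mul (p q : ℂ[X]) : Phi (p * q) = Phi p * Phi q := by
  rw [Phi, Phi, Phi, Polynomial.map_mul, Polynomial.reverse_mul_of_domain]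

lemma Phi_C (c : ℂ) : Phi (C c) = C ((starRingEnd ℂ) c) := by
  rw [Phi, Polynomial.map_C, Polynomial.reverse_C]

lemma reverse_X_sub_C (b : ℂ) : (X - C b).reverse = 1 - C b * X := by
  ext k
  rw [Polynomial.coeff_reverse, Polynomial.natDegree_X_sub_C]
  match k with
  | 0 => rw [Polynomial.revAt_le (by norm_num)]; simp
  | 1 => rw [Polynomial.revAt_le (by norm_num)]; simp [Polynomial.coeff_one]
  | (n+2) =>
    rw [Polynomial.revAt_eq_self_of_lt (by omega)]
    simp only [Polynomial.coeff_sub, Polynomial.coeff_X, Polynomial.coeff_C,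
      Polynomial.coeff_one, Polynomial.coeff_C_mul]
    norm_num

lemma Phi_X_sub_C {b : ℂ} (hb : b ≠ 0) :
    Phi (X - C b) = C (-(starRingEnd ℂ) b) * (X - C (((starRingEnd ℂ) b)⁻¹)) := by
  rw [Phi, Polynomial.map_sub, Polynomial.map_X, Polynomial.map_C, reverse_X_sub_C]
  have hb' : (starRingEnd ℂ) b ≠ 0 := by simpa using hb
  have h1 : (starRingEnd ℂ) b * ((starRingEnd ℂ) b)⁻¹ = 1 := mul_inv_cancel₀ hb'
  have key : C (-(starRingEnd ℂ) b) * (X - C (((starRingEnd ℂ) b)⁻¹))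
      = 1 - C ((starRingEnd ℂ) b) * X := by
    calc C (-(starRingEnd ℂ) b) * (X - C (((starRingEnd ℂ) b)⁻¹))
        = C ((starRingEnd ℂ) b * ((starRingEnd ℂ) b)⁻¹) - C ((starRingEnd ℂ) b) * X := by
          rw [map_mul, map_neg]; ring
      _ = 1 - C ((starRingEnd ℂ) b) * X := by rw [h1, map_one]
  exact key.symm

lemma Phi_prod (s : Multiset ℂ) (hs : ∀ r ∈ s, r ≠ 0) :
    Phi ((s.map fun r => X - C r).prod)
      = C ((s.map fun r => -(starRingEnd ℂ) r).prod)
        * ((s.map fun r => X - C (((starRingEnd ℂ) r)⁻¹)).prod) := by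
  induction s using Multiset.induction_on with
  | empty => simp only [Multiset.map_zero, Multiset.prod_zero, Phi, Polynomial.map_one]; rw [← Polynomial.C_1, Polynomial.reverse_C, Polynomial.C_1]; simp
  | cons r t ih =>
    have hr : r ≠ 0 := hs r (Multiset.mem_cons_self r t)
    have ht : ∀ x ∈ t, x ≠ 0 := fun x hx => hs x (Multiset.mem_cons_of_mem hx)
    simp only [Multiset.map_cons, Multiset.prod_cons]
    rw [Phi_mul, Phi_X_sub_C hr, ih ht, map_mul]
    ring
set_option maxHeartbeats 1000000 in
lemma fejer_main (N : ℕ) (a : ℤ → ℂ)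
    (hpos : ∀ lam : ℂ, ‖lam‖ = 1 →
      (∑ n ∈ Finset.Icc (-(N : ℤ)) N, a n * lam ^ n).im = 0 ∧
      0 < (∑ n ∈ Finset.Icc (-(N : ℤ)) N, a n * lam ^ n).re)
    (ha : a (-(N : ℤ)) ≠ 0) :
    ∃ p : Fin (N + 1) → ℂ, ∀ lam : ℂ, ‖lam‖ = 1 →
      ∑ n ∈ Finset.Icc (-(N : ℤ)) N, a n * lam ^ n
        = ((‖∑ k : Fin (N + 1), p k * lam ^ (k : ℕ)‖ ^ 2 : ℝ) : ℂ) := by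
  have hsymm := coeff_symm N a hpos
  set τ : ℂ → ℂ := fun l => ∑ n ∈ Finset.Icc (-(N : ℤ)) N, a n * l ^ n with hτdef
  have hτne : ∀ l : ℂ, ‖l‖ = 1 → τ l ≠ 0 := by
    intro l hl h0
    have := (hpos l hl).2
    rw [show (∑ n ∈ Finset.Icc (-(N : ℤ)) N, a n * l ^ n) = τ l from rfl, h0] at this
    simp at this
  set q : Polynomial ℂ := sumPoly N a with hqdef
  have hq0 : q.coeff 0 = a (-(N : ℤ)) := by
    rw [hqdef, sumPoly_coeff]; norm_num
  have haN : a (N : ℤ) ≠ 0 := by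
    have h1 : a (N : ℤ) = (starRingEnd ℂ) (a (-(N : ℤ))) := by
      have := hsymm (N : ℤ) (by simp [Finset.mem_Icc])
      simpa using this
    rw [h1]
    simpa using ha
  have hqtop : q.coeff (2 * N) = a (N : ℤ) := by
    rw [hqdef, sumPoly_coeff]
    rw [if_pos (by push_cast; omega)]
    congr 1
    push_cast; ring
  have hqne : q ≠ 0 := by
    intro h
    rw [h] at hq0
    exact ha (by simpa using hq0.symm)
  have hdeg_le : q.natDegree ≤ 2 * N := by
    rw [Polynomial.natDegree_le_iff_coeff_eq_zero]
    intro k hk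
    rw [hqdef, sumPoly_coeff, if_neg (by push_cast; omega)]
  have hdeg : q.natDegree = 2 * N :=
    le_antisymm hdeg_le (Polynomial.le_natDegree_of_ne_zero (hqtop ▸ haN))
  -- Phi symmetry
  have hPhi : Phi q = q := by
    ext k
    rw [Phi, Polynomial.coeff_reverse, Polynomial.natDegree_map, hdeg]
    by_cases hk : k ≤ 2 * N
    · rw [Polynomial.revAt_le hk, Polynomial.coeff_map]
      rw [hqdef, sumPoly_coeff, sumPoly_coeff]
      rw [if_pos (by push_cast; omega), if_pos (by push_cast; omega)]
      have harg : ((2 * N - k : ℕ) : ℤ) - N = -(((k : ℤ) - N)) := by push_cast; omega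
      rw [harg]
      have hmem : ((k : ℤ) - N) ∈ Finset.Icc (-(N : ℤ)) N := by
        simp only [Finset.mem_Icc]; omega
      exact (hsymm _ hmem).symm
    · rw [Polynomial.revAt_eq_self_of_lt (by omega), Polynomial.coeff_map]
      rw [hqdef, sumPoly_coeff, if_neg (by push_cast; omega), map_zero]
  -- roots
  set T : Multiset ℂ := q.roots with hTdef
  have hsplits := IsAlgClosed.splits q
  have hcard : Multiset.card T = 2 * N := by
    rw [hTdef, ← hdeg]
    exact (Polynomial.splits_iff_card_roots.mp hsplits)
  have hT0 : ∀ r ∈ T, r ≠ 0 := by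
    intro r hr h0
    have hroot : q.IsRoot r := (Polynomial.mem_roots hqne).mp hr
    rw [h0] at hroot
    rw [Polynomial.IsRoot, ← Polynomial.coeff_zero_eq_eval_zero, hq0] at hroot
    exact ha hroot
  have hTeval : ∀ l : ℂ, ‖l‖ = 1 → q.eval l = l ^ N * τ l := by
    intro l hl
    have hl0 : l ≠ 0 := by intro h'; simp [h'] at hl
    rw [hqdef]; exact sumPoly_eval N a l hl0
  have hTcirc : ∀ r ∈ T, ¬ (‖r‖ = 1) := by
    intro r hr hcirc
    have hroot : q.IsRoot r := (Polynomial.mem_roots hqne).mp hr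
    have hr0 : r ≠ 0 := hT0 r hr
    have := hTeval r hcirc
    rw [Polynomial.IsRoot.def] at hroot
    rw [hroot] at this
    exact hτne r hcirc (by
      field_simp [pow_ne_zero N hr0] at this
      exact (mul_eq_zero.mp this.symm).resolve_left (pow_ne_zero N hr0))
  set c : ℂ := q.leadingCoeff with hcdef
  have hc : c ≠ 0 := Polynomial.leadingCoeff_ne_zero.mpr hqne
  have hfact : q = Polynomial.C c * (T.map fun r => Polynomial.X - Polynomial.C r).prod :=
    (Polynomial.C_leadingCoeff_mul_prod_multiset_X_sub_C (Polynomial.splits_iff_card_roots.mp hsplits)).symm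
  -- root symmetry
  set σ : ℂ → ℂ := fun r => ((starRingEnd ℂ) r)⁻¹ with hσdef
  have hmapσ : T.map σ = T := by
    have h1 : Phi q = Polynomial.C ((starRingEnd ℂ) c * (T.map fun r => -(starRingEnd ℂ) r).prod)
        * ((T.map σ).map fun s => Polynomial.X - Polynomial.C s).prod := by
      rw [hfact, Phi_mul, Phi_C, Phi_prod T hT0, map_mul, Multiset.map_map, mul_assoc]
      rfl
    have hc' : (starRingEnd ℂ) c * (T.map fun r => -(starRingEnd ℂ) r).prod ≠ 0 := by
      apply mul_ne_zero (by simpa using hc)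
      apply Multiset.prod_ne_zero
      intro h0
      obtain ⟨r, hr, hr0⟩ := Multiset.mem_map.mp h0
      exact hT0 r hr (by simpa using hr0.symm)
    have h2 : q.roots = T.map σ := by
      conv_lhs => rw [← hPhi, h1]
      rw [Polynomial.roots_C_mul _ hc', Polynomial.roots_multiset_prod_X_sub_C]
    rw [hTdef] at h2 ⊢
    exact h2.symm
  -- split roots inside/outside
  set A : Multiset ℂ := T.filter (fun r => ‖r‖ < 1) with hAdef
  set B : Multiset ℂ := T.filter (fun r => ¬ ‖r‖ < 1) with hBdef
  have hABT : A + B = T := Multiset.filter_add_not _ T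
  have hB : B = A.map σ := by
    have h1 : B = (T.map σ).filter (fun r => ¬ ‖r‖ < 1) := by rw [hmapσ]
    rw [h1, Multiset.filter_map]
    congr 1
    apply Multiset.filter_congr
    intro r hr
    have hr0 : r ≠ 0 := hT0 r hr
    have hrn : ‖r‖ ≠ 1 := hTcirc r hr
    have hrpos : 0 < ‖r‖ := norm_pos_iff.mpr hr0
    have hσn : ‖σ r‖ = ‖r‖⁻¹ := by
      rw [hσdef]
      simp [norm_inv]
    simp only [Function.comp_apply, hσn]
    constructor
    · intro h
      rcases lt_trichotomy (‖r‖) 1 with h' | h' | h'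
      · exact h'
      · exact absurd h' hrn
      · exfalso; exact h (by rw [inv_lt_one_iff₀]; right; exact h')
    · intro h hcon
      rw [inv_lt_one_iff₀] at hcon
      rcases hcon with h' | h'
      · linarith
      · linarith
  have hcardA : Multiset.card A = N := by
    have h1 := congrArg Multiset.card hABT
    rw [Multiset.card_add, hcard, hB, Multiset.card_map] at h1
    omega
  -- the polynomial g
  set g : Polynomial ℂ := (A.map fun r => Polynomial.X - Polynomial.C r).prod with hgdef
  have hgmonic : g.Monic :=
    Polynomial.monic_multiset_prod_of_monic A (fun r => Polynomial.X - Polynomial.C r)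
      (fun r _ => Polynomial.monic_X_sub_C r)
  have hgdeg : g.natDegree = N := by
    rw [hgdef, Polynomial.natDegree_multiset_prod_of_monic _ (fun f hf => by
      obtain ⟨r, _, rfl⟩ := Multiset.mem_map.mp hf
      exact Polynomial.monic_X_sub_C r)]
    rw [Multiset.map_map]
    simp only [Function.comp_apply, Polynomial.natDegree_X_sub_C]
    rw [Multiset.map_const', Multiset.sum_replicate, smul_eq_mul, mul_one, hcardA]
  have hgeval : ∀ l : ℂ, g.eval l = (A.map fun r => l - r).prod := by
    intro l
    rw [hgdef, Polynomial.eval_multiset_prod, Multiset.map_map]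
    exact congr_arg Multiset.prod (Multiset.map_congr rfl (fun r _ => by simp))
  set Pc : ℂ := (A.map fun r => (starRingEnd ℂ) r).prod with hPcdef
  have hPc : Pc ≠ 0 := by
    apply Multiset.prod_ne_zero
    intro h0
    obtain ⟨r, hr, hr0⟩ := Multiset.mem_map.mp h0
    have h00 : (starRingEnd ℂ) r = (starRingEnd ℂ) 0 := by simpa using hr0
    exact hT0 r (Multiset.mem_of_mem_filter hr) ((starRingEnd ℂ).injective h00)
  set K : ℂ := c * (-1 : ℂ) ^ N * Pc⁻¹ with hKdef
  -- key identity
  have hKey : ∀ l : ℂ, ‖l‖ = 1 → τ l = K * ((‖g.eval l‖ ^ 2 : ℝ) : ℂ) := by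
    intro l hl
    have hl0 : l ≠ 0 := by intro h'; simp [h'] at hl
    have hlc : l * (starRingEnd ℂ) l = 1 := by
      rw [Complex.mul_conj]
      norm_cast
      rw [Complex.normSq_eq_norm_sq, hl]; norm_num
    -- eval of q via roots
    have h1 : q.eval l = c * ((A.map fun r => l - r).prod * (B.map fun r => l - r).prod) := by
      conv_lhs => rw [hfact]
      rw [Polynomial.eval_mul, Polynomial.eval_C, Polynomial.eval_multiset_prod, ← hABT]
      rw [Multiset.map_add, Multiset.map_add, Multiset.prod_add, Multiset.map_map, Multiset.map_map]
      congr 1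
      congr 1 <;> exact congr_arg Multiset.prod (Multiset.map_congr rfl (fun r _ => by simp))
    have h2 : (B.map fun r => l - r).prod
        = (-l) ^ N * ((starRingEnd ℂ) (g.eval l) * Pc⁻¹) := by
      rw [hB, Multiset.map_map]
      have hptwise : ∀ r ∈ A, l - σ r = (-l) * ((starRingEnd ℂ) (l - r) * ((starRingEnd ℂ) r)⁻¹) := by
        intro r hr
        have hr0 : r ≠ 0 := hT0 r (Multiset.mem_of_mem_filter hr)
        have hcr : (starRingEnd ℂ) r ≠ 0 := fun h =>
          hr0 ((starRingEnd ℂ).injective (by simpa using h))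
        have h1' : ((starRingEnd ℂ) r)⁻¹ * (starRingEnd ℂ) r = 1 := inv_mul_cancel₀ hcr
        show l - ((starRingEnd ℂ) r)⁻¹ = _
        apply mul_right_cancel₀ hcr
        have h2' : -l * ((starRingEnd ℂ) (l - r) * ((starRingEnd ℂ) r)⁻¹) * (starRingEnd ℂ) r
            = -l * ((starRingEnd ℂ) l - (starRingEnd ℂ) r) := by
          rw [map_sub]
          calc -l * (((starRingEnd ℂ) l - (starRingEnd ℂ) r) * ((starRingEnd ℂ) r)⁻¹)
                * (starRingEnd ℂ) r
              = -l * ((starRingEnd ℂ) l - (starRingEnd ℂ) r)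
                * (((starRingEnd ℂ) r)⁻¹ * (starRingEnd ℂ) r) := by ring
            _ = _ := by rw [h1', mul_one]
        rw [h2']
        have h3' : (l - ((starRingEnd ℂ) r)⁻¹) * (starRingEnd ℂ) r
            = l * (starRingEnd ℂ) r - 1 := by
          calc (l - ((starRingEnd ℂ) r)⁻¹) * (starRingEnd ℂ) r
              = l * (starRingEnd ℂ) r - ((starRingEnd ℂ) r)⁻¹ * (starRingEnd ℂ) r := by ring
            _ = _ := by rw [h1']
        rw [h3']
        linear_combination hlc
      have hmapeq : Multiset.map ((fun r => l - r) ∘ σ) A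
          = Multiset.map (fun r => (-l) * ((starRingEnd ℂ) (l - r) * ((starRingEnd ℂ) r)⁻¹)) A :=
        Multiset.map_congr rfl (fun r hr => hptwise r hr)
      rw [hmapeq]
      have hsplit : (A.map fun r => (-l) * ((starRingEnd ℂ) (l - r) * ((starRingEnd ℂ) r)⁻¹)).prod
          = (A.map fun _ => -l).prod
            * ((A.map fun r => (starRingEnd ℂ) (l - r)).prod
            * (A.map fun r => ((starRingEnd ℂ) r)⁻¹).prod) := by
        rw [← Multiset.prod_map_mul, ← Multiset.prod_map_mul]
      rw [hsplit]
      congr 1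
      · rw [Multiset.map_const', Multiset.prod_replicate, hcardA]
      congr 1
      · rw [hgeval, ← Multiset.prod_hom _ (starRingEnd ℂ), Multiset.map_map]
        rfl
      · rw [hPcdef]
        exact Multiset.prod_map_inv
    have h3 : l ^ N * τ l = c * ((A.map fun r => l - r).prod
        * ((-l) ^ N * ((starRingEnd ℂ) (g.eval l) * Pc⁻¹))) := by
      rw [← hTeval l hl, h1, h2]
    rw [← hgeval] at h3
    have h4 : τ l = K * (g.eval l * (starRingEnd ℂ) (g.eval l)) := by
      apply mul_left_cancel₀ (pow_ne_zero N hl0)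
      rw [h3, hKdef, neg_pow]
      ring
    rw [h4, Complex.mul_conj]
    congr 1
    norm_cast
    rw [Complex.normSq_eq_norm_sq]
  -- positivity of the constant
  have h1norm : ‖(1 : ℂ)‖ = 1 := by norm_num
  have hτ1re : τ 1 = (((τ 1).re : ℝ) : ℂ) := by
    have him := (hpos 1 h1norm).1
    exact (Complex.conj_eq_iff_re.mp (Complex.conj_eq_iff_im.mpr him)).symm
  have hg1 : g.eval 1 ≠ 0 := by
    intro h0
    have hk1 := hKey 1 h1norm
    rw [h0] at hk1
    simp only [norm_zero] at hk1
    norm_num at hk1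
    exact hτne 1 h1norm hk1
  set κ : ℝ := (τ 1).re / ‖g.eval 1‖ ^ 2 with hκdef
  have hκpos : 0 < κ := div_pos (hpos 1 h1norm).2 (pow_pos (norm_pos_iff.mpr hg1) 2)
  have hgn1 : ((‖g.eval 1‖ ^ 2 : ℝ) : ℂ) ≠ 0 := by
    simp only [ne_eq, Complex.ofReal_eq_zero, pow_eq_zero_iff, norm_eq_zero]
    simp [hg1]
  have hK : K = (κ : ℂ) := by
    have h5 := hKey 1 h1norm
    rw [hτ1re] at h5
    have hXne : (‖g.eval 1‖ ^ 2 : ℝ) ≠ 0 := ne_of_gt (pow_pos (norm_pos_iff.mpr hg1) 2)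
    have h6 : (κ : ℂ) * ((‖g.eval 1‖ ^ 2 : ℝ) : ℂ) = (((τ 1).re : ℝ) : ℂ) := by
      rw [hκdef]
      norm_cast
      exact div_mul_cancel₀ _ hXne
    apply mul_right_cancel₀ hgn1
    rw [← h5, h6]
  -- conclusion
  refine ⟨fun k => ((Real.sqrt κ : ℝ) : ℂ) * g.coeff k, ?_⟩
  intro l hl
  have hsum : ∑ k : Fin (N + 1), ((Real.sqrt κ : ℝ) : ℂ) * g.coeff (k : ℕ) * l ^ (k : ℕ)
      = ((Real.sqrt κ : ℝ) : ℂ) * g.eval l := by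
    rw [Polynomial.eval_eq_sum_range' (n := N + 1) (by rw [hgdeg]; omega) l]
    rw [Finset.mul_sum]
    rw [Fin.sum_univ_eq_sum_range (fun k => ((Real.sqrt κ : ℝ) : ℂ) * g.coeff k * l ^ k) (N + 1)]
    apply Finset.sum_congr rfl
    intros
    ring
  show τ l = ((‖∑ k : Fin (N + 1), ((Real.sqrt κ : ℝ) : ℂ) * g.coeff (k : ℕ) * l ^ (k : ℕ)‖ ^ 2
    : ℝ) : ℂ)
  rw [hKey l hl, hK]
  rw [hsum, norm_mul, Complex.norm_real, Real.norm_eq_abs,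
    _root_.abs_of_nonneg (Real.sqrt_nonneg κ), mul_pow, Real.sq_sqrt hκpos.le]
  push_cast
  ring
/-- Fejér–Riesz: if the trigonometric polynomial
`τ(λ) = ∑_{n=-N}^{N} aₙ λⁿ` is real and strictly positive on the unit circle, then there is a
polynomial `p(z) = ∑_{n=0}^{N} pₙ zⁿ` with `τ(λ) = |p(λ)|²` on the unit circle. -/
theorem fejer_riesz (N : ℕ) (a : ℤ → ℂ)
    (hpos : ∀ lam : ℂ, ‖lam‖ = 1 →
      (∑ n ∈ Finset.Icc (-(N : ℤ)) N, a n * lam ^ n).im = 0 ∧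
      0 < (∑ n ∈ Finset.Icc (-(N : ℤ)) N, a n * lam ^ n).re) :
    ∃ p : Fin (N + 1) → ℂ, ∀ lam : ℂ, ‖lam‖ = 1 →
      ∑ n ∈ Finset.Icc (-(N : ℤ)) N, a n * lam ^ n
        = ((‖∑ k : Fin (N + 1), p k * lam ^ (k : ℕ)‖ ^ 2 : ℝ) : ℂ) := by
  revert hpos
  induction N with
  | zero =>
    intro hpos
    apply fejer_main 0 a hpos
    intro h0
    have h2 := (hpos 1 (by norm_num)).2
    have h0' : a 0 = 0 := by simpa using h0
    simp only [Nat.cast_zero, neg_zero, Finset.Icc_self, Finset.sum_singleton] at h2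
    simp [h0'] at h2
  | succ M ih =>
    intro hpos
    by_cases ha : a (-((M + 1 : ℕ) : ℤ)) = 0
    · have haN1 : a ((M + 1 : ℕ) : ℤ) = 0 := by
        have := coeff_symm (M + 1) a hpos ((M + 1 : ℕ) : ℤ) (by simp only [Finset.mem_Icc]; push_cast; omega)
        rw [this]
        push_cast
        rw [show -((M : ℤ) + 1) = -((M + 1 : ℕ) : ℤ) by push_cast; ring, ha, map_zero]
      have hsum_eq : ∀ l : ℂ, ∑ n ∈ Finset.Icc (-((M + 1 : ℕ) : ℤ)) ((M + 1 : ℕ) : ℤ), a n * l ^ n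
          = ∑ n ∈ Finset.Icc (-(M : ℤ)) M, a n * l ^ n := by
        intro l
        refine (Finset.sum_subset ?_ ?_).symm
        · intro x hx
          simp only [Finset.mem_Icc] at hx ⊢
          push_cast
          omega
        · intro x hx hnx
          simp only [Finset.mem_Icc] at hx hnx
          have hcase : x = -((M + 1 : ℕ) : ℤ) ∨ x = ((M + 1 : ℕ) : ℤ) := by
            push_cast at hx hnx ⊢
            omega
          rcases hcase with rfl | rfl
          · rw [ha, zero_mul]
          · rw [haN1, zero_mul]
      have hpos' : ∀ lam : ℂ, ‖lam‖ = 1 →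
          (∑ n ∈ Finset.Icc (-(M : ℤ)) M, a n * lam ^ n).im = 0 ∧
          0 < (∑ n ∈ Finset.Icc (-(M : ℤ)) M, a n * lam ^ n).re := by
        intro l hl
        have := hpos l hl
        rwa [hsum_eq l] at this
      obtain ⟨p, hp⟩ := ih hpos'
      refine ⟨fun k => if h : (k : ℕ) < M + 1 then p ⟨k, h⟩ else 0, ?_⟩
      intro l hl
      have hext : ∑ k : Fin (M + 1 + 1),
            (if h : (k : ℕ) < M + 1 then p ⟨k, h⟩ else 0) * l ^ (k : ℕ)
          = ∑ k : Fin (M + 1), p k * l ^ (k : ℕ) := by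
        rw [Fin.sum_univ_castSucc]
        simp only [Fin.coe_castSucc, Fin.val_last]
        rw [dif_neg (lt_irrefl (M + 1)), zero_mul, add_zero]
        apply Finset.sum_congr rfl
        intro k _
        rw [dif_pos k.isLt]
      rw [hsum_eq l, hp l hl, hext]
    · exact fejer_main (M + 1) a hpos ha
end
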